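/- Let V ⊂ ℝ^n be a compact convex measurable set of positive Lebesgue measure, let σ > 0, let 0 < γ ≤ β, and let φ : ℝ^n → ℝ be continuous with φ(q) ≥ β for all q. For p ∈ ℝ^n define λ_p(q) = exp(−‖p − q‖²/σ²)(φ(q) − γ·exp(−‖p − q‖²/σ²)), the mass M_V(p) = ∫_V λ_p(q) dq, the centroid C_V(p) = (∫_V q λ_p(q) dq)/M_V(p), and F(p) = ∫_V (φ(q) − γ·exp(−‖p − q‖²/σ²))² dq. Then for every p ∈ ℝ^n, ∇F(p) = (4γ/σ²)·M_V(p)·(p − C_V(p)), and ∇F(p) = 0 if and only if p = C_V(p). -/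

import Mathlib

set_option synthInstance.maxHeartbeats 1000000
set_option maxHeartbeats 1000000


open MeasureTheory

variable {n : ℕ}

/-- The modified density
`λ_p q = exp (-‖p - q‖²/σ²) · (φ q - γ · exp (-‖p - q‖²/σ²))`. -/
noncomputable def modDensity (σ γ : ℝ) (φ : EuclideanSpace ℝ (Fin n) → ℝ)
    (p q : EuclideanSpace ℝ (Fin n)) : ℝ :=
  Real.exp (-‖p - q‖ ^ 2 / σ ^ 2) *
    (φ q - γ * Real.exp (-‖p - q‖ ^ 2 / σ ^ 2))

/-- The generalized mass `M_V p = ∫_V λ_p q dq`. -/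
noncomputable def genMass (V : Set (EuclideanSpace ℝ (Fin n))) (σ γ : ℝ)
    (φ : EuclideanSpace ℝ (Fin n) → ℝ) (p : EuclideanSpace ℝ (Fin n)) : ℝ :=
  ∫ q in V, modDensity σ γ φ p q

/-- The generalized centroid `C_V p = (∫_V q λ_p q dq) / M_V p`. -/
noncomputable def genCentroid (V : Set (EuclideanSpace ℝ (Fin n))) (σ γ : ℝ)
    (φ : EuclideanSpace ℝ (Fin n) → ℝ) (p : EuclideanSpace ℝ (Fin n)) :
    EuclideanSpace ℝ (Fin n) :=
  (genMass V σ γ φ p)⁻¹ • ∫ q in V, modDensity σ γ φ p q • q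

local notation "E" => EuclideanSpace ℝ (Fin n)

lemma normsq_deriv (q x : E) :
    HasFDerivAt (fun p : E => ‖p - q‖ ^ 2) ((2:ℝ) • (innerSL ℝ (x - q))) x := by
  have h0 : HasFDerivAt (fun p : E => p - q) (ContinuousLinearMap.id ℝ E) x := by
    simpa using (hasFDerivAt_id x).sub_const q
  have h := (h0.inner ℝ h0)
  have hfun : (fun t : E => (inner ℝ (t - q) (t - q) : ℝ)) = fun t : E => ‖t - q‖ ^ 2 := by
    funext t; rw [real_inner_self_eq_norm_sq]
  rw [hfun] at h
  refine h.congr_fderiv ?_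
  ext v
  simp only [ContinuousLinearMap.smul_apply, ContinuousLinearMap.comp_apply,
    ContinuousLinearMap.prod_apply, ContinuousLinearMap.id_apply, fderivInnerCLM_apply,
    smul_eq_mul, innerSL_apply_apply, real_inner_comm (x - q) v]
  ring

lemma integrand_deriv (σ γ : ℝ) (hσ : σ ≠ 0) (φ : E → ℝ) (q x : E) :
    HasFDerivAt (fun p : E => (φ q - γ * Real.exp (-‖p - q‖ ^ 2 / σ ^ 2)) ^ 2)
      (((4 * γ / σ ^ 2) * modDensity σ γ φ x q) • (innerSL ℝ (x - q))) x := by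
  have h1 := normsq_deriv q x
  have h2 := h1.const_mul (-(σ ^ 2)⁻¹)
  have hfun : (fun p : E => -(σ ^ 2)⁻¹ * ‖p - q‖ ^ 2) = fun p : E => -‖p - q‖ ^ 2 / σ ^ 2 := by
    funext p; ring
  rw [hfun] at h2
  have h3 := h2.exp
  have h4 := (h3.const_mul γ).const_sub (φ q)
  have h5 := h4.mul h4
  have hfun2 : ((fun p : E => (φ q - γ * Real.exp (-‖p - q‖ ^ 2 / σ ^ 2))) *
      (fun p : E => (φ q - γ * Real.exp (-‖p - q‖ ^ 2 / σ ^ 2)))) =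
      fun p : E => (φ q - γ * Real.exp (-‖p - q‖ ^ 2 / σ ^ 2)) ^ 2 := by
    funext p; simp only [Pi.mul_apply]; ring
  rw [hfun2] at h5
  refine h5.congr_fderiv ?_
  ext v
  simp [modDensity, ContinuousLinearMap.smul_apply, smul_smul]
  have : σ ^ 2 ≠ 0 := pow_ne_zero 2 hσ
  field_simp
  ring

lemma exp_arg_nonpos (σ : ℝ) (x q : E) : -‖x - q‖ ^ 2 / σ ^ 2 ≤ 0 :=
  div_nonpos_of_nonpos_of_nonneg (neg_nonpos.2 (by positivity)) (by positivity)

lemma exp_le_one' (σ : ℝ) (x q : E) : Real.exp (-‖x - q‖ ^ 2 / σ ^ 2) ≤ 1 :=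
  Real.exp_le_one_iff.2 (exp_arg_nonpos σ x q)

lemma modDensity_abs_le (σ β γ : ℝ) (hγ : 0 < γ)
    (φ : E → ℝ) (x q : E) : |modDensity σ γ φ x q| ≤ |φ q| + γ := by
  have he0 := Real.exp_pos (-‖x - q‖ ^ 2 / σ ^ 2)
  have he1 := exp_le_one' σ x q
  rw [modDensity, abs_mul]
  have h3 : |γ * Real.exp (-‖x - q‖ ^ 2 / σ ^ 2)| ≤ γ := by
    rw [abs_mul, abs_of_pos hγ, abs_of_pos he0]
    exact mul_le_of_le_one_right hγ.le he1
  have h4 : |φ q - γ * Real.exp (-‖x - q‖ ^ 2 / σ ^ 2)| ≤ |φ q| + γ :=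
    le_trans (abs_sub _ _) (by linarith)
  calc |Real.exp (-‖x - q‖ ^ 2 / σ ^ 2)| * |φ q - γ * Real.exp (-‖x - q‖ ^ 2 / σ ^ 2)|
      ≤ 1 * (|φ q| + γ) := by
        apply mul_le_mul _ h4 (abs_nonneg _) one_pos.le
        rwa [abs_of_pos he0]
    _ = |φ q| + γ := one_mul _

lemma modDensity_nonneg (σ β γ : ℝ) (hγ : 0 < γ) (hγβ : γ ≤ β)
    (φ : E → ℝ) (hφβ : ∀ q : E, β ≤ φ q) (x q : E) :
    0 ≤ modDensity σ γ φ x q := by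
  have he0 := Real.exp_pos (-‖x - q‖ ^ 2 / σ ^ 2)
  have he1 := exp_le_one' σ x q
  have : γ * Real.exp (-‖x - q‖ ^ 2 / σ ^ 2) ≤ γ := mul_le_of_le_one_right hγ.le he1
  have := hφβ q
  exact mul_nonneg he0.le (by linarith)

lemma modDensity_pos (σ β γ : ℝ) (hσ : σ ≠ 0) (hγ : 0 < γ) (hγβ : γ ≤ β)
    (φ : E → ℝ) (hφβ : ∀ q : E, β ≤ φ q) (x q : E) (hxq : q ≠ x) :
    0 < modDensity σ γ φ x q := by
  have he0 := Real.exp_pos (-‖x - q‖ ^ 2 / σ ^ 2)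
  have hn : 0 < ‖x - q‖ ^ 2 := by
    have h' : x - q ≠ 0 := sub_ne_zero.2 (Ne.symm hxq)
    have := norm_pos_iff.2 h'
    positivity
  have he1 : Real.exp (-‖x - q‖ ^ 2 / σ ^ 2) < 1 := by
    rw [Real.exp_lt_one_iff]
    exact div_neg_of_neg_of_pos (neg_neg_iff_pos.2 hn) (by positivity)
  have : γ * Real.exp (-‖x - q‖ ^ 2 / σ ^ 2) < γ := by nlinarith
  have := hφβ q
  exact mul_pos he0 (by linarith)


/-- For a compact convex measurable set `V` of positive
measure, a continuous density `φ ≥ β` and `0 < γ ≤ β`, the gradient of the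
cell cost `F p = ∫_V (φ q - γ exp (-‖p - q‖²/σ²))² dq` is
`∇F p = (4γ/σ²) · M_V p · (p - C_V p)`, and it vanishes iff `p` is the
generalized centroid of `V`. -/
theorem gradient_eq_mass_smul_sub_centroid
    (V : Set (EuclideanSpace ℝ (Fin n)))
    (hVcompact : IsCompact V) (hVconv : Convex ℝ V)
    (hVmeas : MeasurableSet V) (hVpos : 0 < volume V)
    (σ β γ : ℝ) (hσ : 0 < σ) (hγ : 0 < γ) (hγβ : γ ≤ β)
    (φ : EuclideanSpace ℝ (Fin n) → ℝ) (hφcont : Continuous φ)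
    (hφβ : ∀ q : EuclideanSpace ℝ (Fin n), β ≤ φ q) :
    ∀ p : EuclideanSpace ℝ (Fin n),
      gradient
        (fun p' : EuclideanSpace ℝ (Fin n) =>
          ∫ q in V, (φ q - γ * Real.exp (-‖p' - q‖ ^ 2 / σ ^ 2)) ^ 2) p =
        ((4 * γ / σ ^ 2) * genMass V σ γ φ p) • (p - genCentroid V σ γ φ p) ∧
      (gradient
        (fun p' : EuclideanSpace ℝ (Fin n) =>
          ∫ q in V, (φ q - γ * Real.exp (-‖p' - q‖ ^ 2 / σ ^ 2)) ^ 2) p = 0 ↔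
        p = genCentroid V σ γ φ p) := by
  intro p
  rcases Nat.eq_zero_or_pos n with hn | hn
  · subst hn
    haveI : Unique (EuclideanSpace ℝ (Fin 0)) :=
      inferInstance
    refine ⟨Subsingleton.elim _ _, ?_⟩
    constructor <;> intro _ <;> exact Subsingleton.elim _ _
  haveI : Nonempty (Fin n) := ⟨⟨0, hn⟩⟩
  haveI : Nontrivial (EuclideanSpace ℝ (Fin n)) :=
    inferInstance
  have hσ2 : (σ : ℝ) ^ 2 ≠ 0 := pow_ne_zero 2 hσ.ne'
  set c : ℝ := 4 * γ / σ ^ 2 with hc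
  have hcpos : 0 < c := by positivity
  -- continuity and integrability
  have hlamcont : Continuous (fun q : E => modDensity σ γ φ p q) := by
    unfold modDensity; fun_prop
  have hlamint : IntegrableOn (fun q : E => modDensity σ γ φ p q) V :=
    hlamcont.continuousOn.integrableOn_compact hVcompact
  have hlamqint : IntegrableOn (fun q : E => modDensity σ γ φ p q • q) V :=
    (hlamcont.smul continuous_id).continuousOn.integrableOn_compact hVcompact
  -- positivity of the mass
  have hMpos : 0 < genMass V σ γ φ p := by
    rw [genMass, setIntegral_pos_iff_support_of_nonneg_ae
      (Filter.Eventually.of_forall fun q => modDensity_nonneg σ β γ hγ hγβ φ hφβ p q) hlamint]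
    have hsub : V \ {p} ⊆ Function.support (fun q : E => modDensity σ γ φ p q) ∩ V :=
      fun q hq => ⟨(modDensity_pos σ β γ hσ.ne' hγ hγβ φ hφβ p q hq.2).ne', hq.1⟩
    calc (0 : ENNReal) < volume V := hVpos
      _ = volume (V \ {p}) := (measure_diff_null (measure_singleton p)).symm
      _ ≤ _ := measure_mono hsub
  have hMne : genMass V σ γ φ p ≠ 0 := hMpos.ne'
  -- bounds for domination
  obtain ⟨K, hK⟩ := hVcompact.exists_bound_of_continuousOn hφcont.continuousOn
  obtain ⟨R, hR⟩ := hVcompact.isBounded.subset_closedBall (0 : E)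
  obtain ⟨q0, hq0⟩ := nonempty_of_measure_ne_zero hVpos.ne'
  have hK0 : 0 ≤ K := le_trans (norm_nonneg _) (hK q0 hq0)
  have hR0 : 0 ≤ R := le_trans (norm_nonneg _) (by simpa using hR hq0)
  set B : ℝ := c * (K + γ) * (‖p‖ + 1 + R) with hB
  -- differentiation under the integral sign
  have hF := hasFDerivAt_integral_of_dominated_of_fderiv_le
    (μ := volume.restrict V) (x₀ := p)
    (F := fun (x : E) (q : E) => (φ q - γ * Real.exp (-‖x - q‖ ^ 2 / σ ^ 2)) ^ 2)
    (F' := fun (x : E) (q : E) =>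
      ((c * modDensity σ γ φ x q) • innerSL ℝ (x - q)))
    (bound := fun _ => B) (Metric.ball_mem_nhds p one_pos)
    (Filter.Eventually.of_forall fun x =>
      (Continuous.aestronglyMeasurable (by fun_prop)))
    (by
      exact (Continuous.continuousOn (by fun_prop)).integrableOn_compact hVcompact)
    (by
      apply Continuous.aestronglyMeasurable
      exact ((continuous_const.mul hlamcont)).smul
        ((innerSL ℝ).continuous.comp (continuous_const.sub continuous_id)))
    (by
      refine (ae_restrict_iff' hVmeas).2 (Filter.Eventually.of_forall fun q hq x hx => ?_)
      show ‖(c * modDensity σ γ φ x q) • (innerSL ℝ) (x - q)‖ ≤ B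
      rw [norm_smul (c * modDensity σ γ φ x q) ((innerSL ℝ) (x - q)), innerSL_apply_norm, Real.norm_eq_abs, abs_mul, abs_of_pos hcpos]
      have h1 : |modDensity σ γ φ x q| ≤ K + γ := by
        have := modDensity_abs_le σ β γ hγ φ x q
        have := hK q hq
        rw [Real.norm_eq_abs] at this
        linarith
      have h2 : ‖x - q‖ ≤ ‖p‖ + 1 + R := by
        have hx' : ‖x - p‖ < 1 := mem_ball_iff_norm.1 hx
        have hq' : ‖q‖ ≤ R := by simpa using hR hq
        calc ‖x - q‖ ≤ ‖x - p‖ + ‖p - q‖ := norm_sub_le_norm_sub_add_norm_sub x p q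
          _ ≤ ‖x - p‖ + (‖p‖ + ‖q‖) := by linarith [norm_sub_le p q]
          _ ≤ ‖p‖ + 1 + R := by linarith
      calc c * |modDensity σ γ φ x q| * ‖x - q‖
          ≤ c * (K + γ) * (‖p‖ + 1 + R) := by
            apply mul_le_mul _ h2 (norm_nonneg _) (by positivity)
            exact mul_le_mul_of_nonneg_left h1 hcpos.le
        _ = B := rfl)
    ((integrableOn_const_iff).2 (Or.inr hVcompact.measure_lt_top))
    (Filter.Eventually.of_forall fun q x _ => integrand_deriv σ γ hσ.ne' φ q x)
  -- identify the derivative with the gradient vector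
  set S1 : E := ∫ q in V, modDensity σ γ φ p q • q with hS1
  set M : ℝ := genMass V σ γ φ p with hM
  have hΦint : IntegrableOn
      (fun q : E => (c * modDensity σ γ φ p q) • innerSL ℝ (p - q)) V :=
    ((((continuous_const.mul hlamcont)).smul
        ((innerSL ℝ).continuous.comp
          (continuous_const.sub continuous_id))).continuousOn).integrableOn_compact hVcompact
  have hgint : IntegrableOn (fun q : E => (c * modDensity σ γ φ p q) • (p - q)) V :=
    ((((continuous_const.mul hlamcont)).smul
        (continuous_const.sub continuous_id)).continuousOn).integrableOn_compact hVcompact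
  have heq : (∫ q in V, (c * modDensity σ γ φ p q) • innerSL ℝ (p - q)) =
      (InnerProductSpace.toDual ℝ E)
        (∫ q in V, (c * modDensity σ γ φ p q) • (p - q)) := by
    ext v
    rw [ContinuousLinearMap.integral_apply hΦint, InnerProductSpace.toDual_apply_apply,
      real_inner_comm, ← integral_inner hgint]
    congr 1
    funext q
    simp only [ContinuousLinearMap.smul_apply, innerSL_apply_apply, smul_eq_mul,
      real_inner_smul_right]
    rw [real_inner_comm]
  -- compute the vector integral
  have hvec : (∫ q in V, (c * modDensity σ γ φ p q) • (p - q)) =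
      (c * M) • (p - genCentroid V σ γ φ p) := by
    have h1 : (fun q : E => (c * modDensity σ γ φ p q) • (p - q)) =
        fun q : E => c • (modDensity σ γ φ p q • p - modDensity σ γ φ p q • q) := by
      funext q; rw [mul_smul, smul_sub]
    have h2 : (c * M) • (p - genCentroid V σ γ φ p) = (c * M) • p - c • S1 := by
      rw [genCentroid, ← hS1, ← hM, smul_sub, smul_smul, mul_assoc,
        mul_inv_cancel₀ hMne, mul_one]
    rw [h1, integral_smul, integral_sub (hlamint.smul_const p) hlamqint,
      integral_smul_const, h2, smul_sub, smul_smul]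
    rfl
  have hGrad : HasGradientAt
      (fun p' : E => ∫ q in V, (φ q - γ * Real.exp (-‖p' - q‖ ^ 2 / σ ^ 2)) ^ 2)
      ((c * M) • (p - genCentroid V σ γ φ p)) p := by
    rw [hasGradientAt_iff_hasFDerivAt]
    rw [← hvec, ← heq]
    exact hF
  have hgradeq := hGrad.gradient
  refine ⟨hgradeq, ?_⟩
  rw [hgradeq]
  rw [smul_eq_zero, sub_eq_zero]
  constructor
  · rintro (h | h)
    · exact absurd h (by positivity)
    · exact h
  · exact fun h => Or.inr h
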